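/- For a positive integer n and an integer k with 0 ≤ k ≤ n-1, the n-dimensional Lebesgue measure of the slab {x ∈ [0,1]^n : k ≤ x_1 + ... + x_n ≤ k+1} equals A(n, k)/n!, where A(n, k) is the Eulerian number counting permutations of {1, ..., n} with exactly k descents. -/

import Mathlib

/-- The Eulerian number `A(n, k)`: the number of permutations of `{1, ..., n}`
with exactly `k` descents. -/
def eulerian (n k : ℕ) : ℕ :=
  (Finset.univ.filter (fun σ : Equiv.Perm (Fin n) =>
    (Finset.univ.filter (fun i : Fin n =>
      (i : ℕ) + 1 < n ∧ σ ⟨((i : ℕ) + 1) % n, Nat.mod_lt _ i.pos⟩ < σ i)).card = k)).card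

open MeasureTheory Finset

namespace S13

variable {n : ℕ}

/-- `i - 1` within `Fin n` (maps `0` to `0`). -/
def prev (i : Fin n) : Fin n := ⟨(i : ℕ) - 1, lt_of_le_of_lt (Nat.sub_le _ _) i.2⟩

lemma prev_lt {i : Fin n} (h : 0 < (i : ℕ)) : prev i < i := by
  simp only [prev, Fin.lt_def]
  omega

/-- `j % n` as an element of `Fin n`. -/
def fm (hn : 0 < n) (j : ℕ) : Fin n := ⟨j % n, Nat.mod_lt _ hn⟩

lemma fm_of_lt (hn : 0 < n) {j : ℕ} (hj : j < n) : (fm hn j : ℕ) = j := Nat.mod_eq_of_lt hj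

/-- The difference linear map: `(L y) i = y i - y (i-1)`, `(L y) 0 = y 0`. -/
noncomputable def Lmap (n : ℕ) : (Fin n → ℝ) →ₗ[ℝ] (Fin n → ℝ) :=
  LinearMap.pi fun i => if (i : ℕ) = 0 then (LinearMap.proj i : (Fin n → ℝ) →ₗ[ℝ] ℝ)
    else (LinearMap.proj i : (Fin n → ℝ) →ₗ[ℝ] ℝ) - LinearMap.proj (prev i)

lemma Lmap_apply (y : Fin n → ℝ) (i : Fin n) :
    Lmap n y i = if (i : ℕ) = 0 then y i else y i - y (prev i) := by
  simp only [Lmap, LinearMap.pi_apply]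
  split <;> simp

lemma det_Lmap : LinearMap.det (Lmap n) = 1 := by
  rw [← LinearMap.det_toMatrix (Pi.basisFun ℝ (Fin n))]
  have hM : ∀ i j, (LinearMap.toMatrix (Pi.basisFun ℝ (Fin n)) (Pi.basisFun ℝ (Fin n))
      (Lmap n)) i j = Lmap n (Pi.single j 1) i := by
    intro i j
    simp [LinearMap.toMatrix_apply]
  rw [Matrix.det_of_lowerTriangular]
  · refine Finset.prod_eq_one fun i _ => ?_
    rw [hM, Lmap_apply]
    split
    · simp
    · rename_i h
      have : prev i ≠ i := ne_of_lt (prev_lt (Nat.pos_of_ne_zero h))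
      simp [Pi.single_apply, this]
  · intro i j hij
    have hij' : (i : Fin n) < j := hij
    rw [hM, Lmap_apply]
    have h1 : i ≠ j := ne_of_lt hij'
    split
    · simp [Pi.single_apply, h1.symm]
    · have h2 : prev i ≠ j := ne_of_lt (lt_of_le_of_lt (show prev i ≤ i by simp only [prev, Fin.le_def]; omega) hij')
      simp [Pi.single_apply, h1.symm, h2.symm]


/-- Partial-sum linear functional: `Fl hn m x = x 0 + ... + x (m-1)`. -/
noncomputable def Fl (hn : 0 < n) (m : ℕ) : (Fin n → ℝ) →ₗ[ℝ] ℝ :=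
  ∑ j ∈ Finset.range m, LinearMap.proj (fm hn j)

lemma Fl_zero (hn : 0 < n) (x : Fin n → ℝ) : Fl hn 0 x = 0 := by simp [Fl]

lemma Fl_succ (hn : 0 < n) (m : ℕ) (x : Fin n → ℝ) :
    Fl hn (m + 1) x = Fl hn m x + x (fm hn m) := by
  simp [Fl, Finset.sum_range_succ]

lemma Fl_n (hn : 0 < n) (x : Fin n → ℝ) : Fl hn n x = ∑ i, x i := by
  simp only [Fl, LinearMap.coe_sum, Finset.sum_apply, LinearMap.proj_apply]
  rw [← Fin.sum_univ_eq_sum_range (fun j => x (fm hn j)) n]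
  refine Finset.sum_congr rfl fun i _ => ?_
  congr 1
  exact Fin.ext (fm_of_lt hn i.2)

lemma Fl_Lmap (hn : 0 < n) (y : Fin n → ℝ) :
    ∀ m, (hm : m < n) → Fl hn (m + 1) (Lmap n y) = y ⟨m, hm⟩ := by
  intro m
  induction m with
  | zero =>
    intro hm
    rw [Fl_succ, Fl_zero, Lmap_apply]
    have h0 : (fm hn 0 : ℕ) = 0 := fm_of_lt hn hn
    rw [if_pos h0, zero_add]
    exact congrArg y (Fin.ext h0)
  | succ m ih =>
    intro hm
    rw [Fl_succ, ih (Nat.lt_of_succ_lt hm), Lmap_apply]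
    have h1 : (fm hn (m + 1) : ℕ) = m + 1 := fm_of_lt hn hm
    rw [if_neg (by omega)]
    have h2 : prev (fm hn (m + 1)) = ⟨m, Nat.lt_of_succ_lt hm⟩ := by
      apply Fin.ext
      simp [prev, h1]
    have h3 : fm hn (m + 1) = ⟨m + 1, hm⟩ := Fin.ext h1
    rw [h2, h3]
    ring

lemma Lmap_Fl (hn : 0 < n) (x : Fin n → ℝ) :
    Lmap n (fun i => Fl hn ((i : ℕ) + 1) x) = x := by
  funext i
  rw [Lmap_apply]
  split
  · rename_i h
    rw [Fl_succ]
    simp only [h]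
    rw [Fl_zero, zero_add]
    congr 1
    exact Fin.ext (by rw [fm_of_lt hn hn, h])
  · rename_i h
    have hp : ((prev i : ℕ) + 1) = (i : ℕ) := by simp only [prev]; omega
    rw [hp, Fl_succ]
    have : fm hn (i : ℕ) = i := Fin.ext (fm_of_lt hn i.2)
    rw [this]
    ring

lemma Fl_single (hn : 0 < n) (a : Fin n) :
    ∀ m, m ≤ n → Fl hn m (Pi.single a 1) = if (a : ℕ) < m then 1 else 0 := by
  intro m
  induction m with
  | zero => intro _; simp [Fl_zero]
  | succ m ih =>
    intro hm
    rw [Fl_succ, ih (by omega)]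
    have hfm : (fm hn m : ℕ) = m := fm_of_lt hn (by omega)
    by_cases hma : (a : ℕ) = m
    · have hfa : fm hn m = a := Fin.ext (by omega)
      rw [hfa, Pi.single_eq_same, if_neg (by omega), if_pos (by omega), zero_add]
    · have hne : fm hn m ≠ a := fun h => hma (by rw [← h, hfm])
      rw [Pi.single_apply, if_neg hne, add_zero]
      by_cases h2 : (a : ℕ) < m
      · rw [if_pos h2, if_pos (by omega)]
      · rw [if_neg h2, if_neg (by omega)]


/-- Descent of `τ` at position `i`: `i ≥ 1` and `τ i < τ (i-1)`. -/
def isDes (τ : Equiv.Perm (Fin n)) (i : Fin n) : Prop := 0 < (i : ℕ) ∧ τ i < τ (prev i)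

instance (τ : Equiv.Perm (Fin n)) (i : Fin n) : Decidable (isDes τ i) := by
  unfold isDes; infer_instance

/-- The 0/1 descent indicator vector. -/
def cvec (τ : Equiv.Perm (Fin n)) : Fin n → ℝ := fun i => if isDes τ i then 1 else 0

/-- Number of descents of `τ`. -/
def desCard (τ : Equiv.Perm (Fin n)) : ℕ := (Finset.univ.filter (isDes τ)).card

lemma sum_cvec (τ : Equiv.Perm (Fin n)) : ∑ i, cvec τ i = (desCard τ : ℝ) := by
  simp [cvec, desCard, Finset.sum_boole]

lemma Fl_cvec_int (hn : 0 < n) (τ : Equiv.Perm (Fin n)) (m : ℕ) :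
    ∃ d : ℕ, Fl hn m (cvec τ) = (d : ℝ) := by
  induction m with
  | zero => exact ⟨0, by simp [Fl_zero]⟩
  | succ m ih =>
    obtain ⟨d, hd⟩ := ih
    by_cases h : isDes τ (fm hn m)
    · exact ⟨d + 1, by rw [Fl_succ, hd]; simp [cvec, h]⟩
    · exact ⟨d, by rw [Fl_succ, hd]; simp [cvec, h]⟩

/-- The open region of `y ∈ (0,1)^n` whose coordinates are ordered like `τ`. -/
def Eset (τ : Equiv.Perm (Fin n)) : Set (Fin n → ℝ) :=
  {y | (∀ i, y i ∈ Set.Ioo (0 : ℝ) 1) ∧ ∀ a b, τ a < τ b → y a < y b}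

/-- The affine map sending `Eset τ` into the slab. -/
noncomputable def psi (τ : Equiv.Perm (Fin n)) (y : Fin n → ℝ) : Fin n → ℝ :=
  Lmap n y + cvec τ

lemma Eset_injOn {τ : Equiv.Perm (Fin n)} {y : Fin n → ℝ}
    (h : ∀ a b, τ a < τ b → y a < y b) : Function.Injective y := by
  intro a b hab
  by_contra hne
  rcases lt_trichotomy (τ a) (τ b) with h1 | h1 | h1
  · exact absurd hab (ne_of_lt (h a b h1))
  · exact hne (τ.injective h1)
  · exact absurd hab.symm (ne_of_lt (h b a h1))

lemma rank_lt_iff {τ : Equiv.Perm (Fin n)} {y : Fin n → ℝ}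
    (h : ∀ a b, τ a < τ b → y a < y b) (a b : Fin n) : τ a < τ b ↔ y a < y b := by
  refine ⟨h a b, fun hy => ?_⟩
  rcases lt_trichotomy (τ a) (τ b) with h1 | h1 | h1
  · exact h1
  · exact absurd (τ.injective h1) (fun he => absurd hy (by rw [he]; exact lt_irrefl _))
  · exact absurd (h b a h1) (not_lt.2 (le_of_lt hy))

lemma rank_exists (y : Fin n → ℝ) (hy : Function.Injective y) :
    ∃ τ : Equiv.Perm (Fin n), ∀ a b, τ a < τ b → y a < y b := by
  refine ⟨(Tuple.sort y)⁻¹, fun a b hab => ?_⟩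
  have hm : Monotone (y ∘ Tuple.sort y) := Tuple.monotone_sort y
  have hs : StrictMono (y ∘ Tuple.sort y) :=
    hm.strictMono_of_injective (hy.comp (Tuple.sort y).injective)
  have := hs hab
  simpa using this

lemma rank_unique {τ₁ τ₂ : Equiv.Perm (Fin n)} {y : Fin n → ℝ}
    (h₁ : ∀ a b, τ₁ a < τ₁ b → y a < y b) (h₂ : ∀ a b, τ₂ a < τ₂ b → y a < y b) :
    τ₁ = τ₂ := by
  have hg : StrictMono (fun u => τ₂ (τ₁⁻¹ u)) := by
    intro u v huv
    have hy : y (τ₁⁻¹ u) < y (τ₁⁻¹ v) := by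
      apply h₁
      simpa using huv
    exact (rank_lt_iff h₂ _ _).2 hy
  haveI : WellFoundedLT (Fin n) := inferInstance
  have hid : (fun u => τ₂ (τ₁⁻¹ u)) = (id : Fin n → Fin n) := by
    refine (StrictMono.range_inj hg strictMono_id).1 ?_
    rw [Set.range_id]
    exact Set.range_eq_univ.2 fun u => ⟨τ₁ (τ₂⁻¹ u), by simp⟩
  ext a : 1
  have := congrFun hid (τ₁ a)
  simpa using this.symm

/-- Any affine hyperplane is Lebesgue-null. -/
lemma hyperplane_null (ℓ : (Fin n → ℝ) →ₗ[ℝ] ℝ) (v : Fin n → ℝ) (hv : ℓ v ≠ 0) (c : ℝ) :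
    volume {x : Fin n → ℝ | ℓ x = c} = 0 := by
  set x₀ : Fin n → ℝ := (c / ℓ v) • v with hx₀
  have hℓx₀ : ℓ x₀ = c := by
    rw [hx₀, ℓ.map_smul, smul_eq_mul, div_mul_cancel₀ _ hv]
  have hset : {x : Fin n → ℝ | ℓ x = c} = (· + (-x₀)) ⁻¹' (LinearMap.ker ℓ : Set (Fin n → ℝ)) := by
    ext x
    simp only [Set.mem_setOf_eq, Set.mem_preimage, SetLike.mem_coe, LinearMap.mem_ker, map_add,
      map_neg, hℓx₀]
    constructor
    · intro h; rw [h]; ring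
    · intro h; linarith
  rw [hset, measure_preimage_add_right]
  refine Measure.addHaar_submodule volume _ fun htop => ?_
  have : v ∈ LinearMap.ker ℓ := htop.symm ▸ Submodule.mem_top
  exact hv (LinearMap.mem_ker.1 this)


lemma measurable_Eset (τ : Equiv.Perm (Fin n)) : MeasurableSet (Eset τ) := by
  have h1 : Eset τ = {y : Fin n → ℝ | ∀ i, y i ∈ Set.Ioo (0 : ℝ) 1} ∩
      ⋂ (a) (b) (_ : τ a < τ b), {y : Fin n → ℝ | y a < y b} := by
    ext y
    simp only [Eset, Set.mem_setOf_eq, Set.mem_inter_iff, Set.mem_iInter]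
  rw [h1]
  refine MeasurableSet.inter ?_ ?_
  · have : {y : Fin n → ℝ | ∀ i, y i ∈ Set.Ioo (0 : ℝ) 1} =
        Set.pi Set.univ fun _ => Set.Ioo (0 : ℝ) 1 := by
      ext y; simp [Set.mem_pi]
    rw [this]
    exact MeasurableSet.univ_pi fun _ => measurableSet_Ioo
  · exact MeasurableSet.iInter fun a => MeasurableSet.iInter fun b =>
      MeasurableSet.iInter fun _ =>
        measurableSet_lt (measurable_pi_apply a) (measurable_pi_apply b)

lemma vol_Eset_eq (τ : Equiv.Perm (Fin n)) :
    volume (Eset τ) = volume (Eset (1 : Equiv.Perm (Fin n))) := by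
  have mp := volume_measurePreserving_piCongrLeft (fun _ : Fin n => ℝ) (τ : Fin n ≃ Fin n)
  have happ : ∀ (g : Fin n → ℝ) (b : Fin n),
      (MeasurableEquiv.piCongrLeft (fun _ : Fin n => ℝ) (τ : Fin n ≃ Fin n)) g b
        = g (τ.symm b) := by
    intro g b
    rw [MeasurableEquiv.coe_piCongrLeft]
    have := Equiv.piCongrLeft_apply_apply (fun _ : Fin n => ℝ) (τ : Fin n ≃ Fin n) g (τ.symm b)
    rwa [Equiv.apply_symm_apply] at this
  have hpre : (MeasurableEquiv.piCongrLeft (fun _ : Fin n => ℝ) (τ : Fin n ≃ Fin n)) ⁻¹'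
      (Eset (1 : Equiv.Perm (Fin n))) = Eset τ := by
    ext g
    simp only [Set.mem_preimage, Eset, Set.mem_setOf_eq, happ, Equiv.Perm.coe_one, id_eq]
    constructor
    · rintro ⟨h1, h2⟩
      refine ⟨fun i => by simpa using h1 (τ i), fun a b hab => ?_⟩
      have := h2 (τ a) (τ b) hab
      simpa using this
    · rintro ⟨h1, h2⟩
      refine ⟨fun i => h1 _, fun a b hab => ?_⟩
      exact h2 (τ.symm a) (τ.symm b) (by simpa using hab)
  rw [← hpre, mp.measure_preimage (measurable_Eset _).nullMeasurableSet]

lemma injective_of_not_diag {y : Fin n → ℝ}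
    (hy : y ∉ ⋃ (p : Fin n × Fin n) (_ : p.1 ≠ p.2), {z : Fin n → ℝ | z p.1 - z p.2 = 0}) :
    Function.Injective y := by
  intro a b hab
  by_contra hne
  exact hy (Set.mem_iUnion.2 ⟨(a, b), Set.mem_iUnion.2 ⟨hne, by simp [hab]⟩⟩)

lemma vol_diag_zero :
    volume (⋃ (p : Fin n × Fin n) (_ : p.1 ≠ p.2), {z : Fin n → ℝ | z p.1 - z p.2 = 0}) = 0 := by
  refine measure_iUnion_null fun p => measure_iUnion_null fun hp => ?_
  have := hyperplane_null ((LinearMap.proj p.1 : (Fin n → ℝ) →ₗ[ℝ] ℝ) - (LinearMap.proj p.2 : (Fin n → ℝ) →ₗ[ℝ] ℝ))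
    (Pi.single p.1 1) (by simp [Pi.single_apply, hp, Ne.symm hp]) 0
  have hsetEq : {z : Fin n → ℝ | z p.1 - z p.2 = 0} =
      {x : Fin n → ℝ | ((LinearMap.proj p.1 : (Fin n → ℝ) →ₗ[ℝ] ℝ) - (LinearMap.proj p.2 : (Fin n → ℝ) →ₗ[ℝ] ℝ)) x = 0} := by
    ext z
    simp
  rw [hsetEq]
  exact this

lemma vol_Eset (_hn : 0 < n) (τ : Equiv.Perm (Fin n)) :
    volume (Eset τ) = 1 / (n.factorial : ENNReal) := by
  classical
  set C : Set (Fin n → ℝ) := {y | ∀ i, y i ∈ Set.Ioo (0 : ℝ) 1} with hC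
  have hCvol : volume C = 1 := by
    have : C = Set.pi Set.univ fun _ : Fin n => Set.Ioo (0 : ℝ) 1 := by
      ext y; simp [hC, Set.mem_pi]
    rw [this, Real.volume_pi_Ioo]
    simp
  set D := ⋃ (p : Fin n × Fin n) (_ : p.1 ≠ p.2), {z : Fin n → ℝ | z p.1 - z p.2 = 0} with hD
  have hsub1 : (⋃ τ : Equiv.Perm (Fin n), Eset τ) ⊆ C := by
    rintro y hy
    obtain ⟨σ, hσ⟩ := Set.mem_iUnion.1 hy
    exact hσ.1
  have hsub2 : C ⊆ (⋃ τ : Equiv.Perm (Fin n), Eset τ) ∪ D := by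
    intro y hy
    by_cases hyD : y ∈ D
    · exact Or.inr hyD
    · obtain ⟨σ, hσ⟩ := rank_exists y (injective_of_not_diag (hD ▸ hyD))
      exact Or.inl (Set.mem_iUnion.2 ⟨σ, hy, hσ⟩)
  have hdisj : Pairwise (Function.onFun Disjoint fun τ : Equiv.Perm (Fin n) => Eset τ) := by
    intro τ₁ τ₂ hne
    rw [Function.onFun, Set.disjoint_left]
    intro y h1 h2
    exact hne (rank_unique h1.2 h2.2)
  have hU : volume (⋃ τ : Equiv.Perm (Fin n), Eset τ) = 1 := by
    refine le_antisymm (hCvol ▸ measure_mono hsub1) ?_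
    calc (1 : ENNReal) = volume C := hCvol.symm
    _ ≤ volume ((⋃ τ : Equiv.Perm (Fin n), Eset τ) ∪ D) := measure_mono hsub2
    _ ≤ volume (⋃ τ : Equiv.Perm (Fin n), Eset τ) + volume D := measure_union_le _ _
    _ = volume (⋃ τ : Equiv.Perm (Fin n), Eset τ) := by rw [vol_diag_zero, add_zero]
  have hsum : volume (⋃ τ : Equiv.Perm (Fin n), Eset τ)
      = (n.factorial : ENNReal) * volume (Eset (1 : Equiv.Perm (Fin n))) := by
    rw [measure_iUnion hdisj fun τ => measurable_Eset τ, tsum_fintype]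
    have : ∀ σ : Equiv.Perm (Fin n), volume (Eset σ)
        = volume (Eset (1 : Equiv.Perm (Fin n))) := vol_Eset_eq
    rw [Finset.sum_congr rfl fun σ _ => this σ, Finset.sum_const, Finset.card_univ,
      Fintype.card_perm, Fintype.card_fin, nsmul_eq_mul]
  have hfac0 : (n.factorial : ENNReal) ≠ 0 := by
    simp [Nat.factorial_ne_zero]
  have hfacT : (n.factorial : ENNReal) ≠ ⊤ := by simp
  rw [vol_Eset_eq τ]
  rw [ENNReal.eq_div_iff hfac0 hfacT]
  rw [← hsum, hU]


def nxt (i : Fin n) : Fin n := ⟨((i : ℕ) + 1) % n, Nat.mod_lt _ i.pos⟩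

/-- The descent count of `τ` agrees with the count used in `eulerian`. -/
lemma desCard_eq (τ : Equiv.Perm (Fin n)) :
    desCard τ = (Finset.univ.filter (fun i : Fin n =>
      (i : ℕ) + 1 < n ∧ τ (nxt i) < τ i)).card := by
  classical
  refine Eq.symm (Finset.card_bij' (fun i _ => nxt i) (fun j _ => prev j) ?_ ?_ ?_ ?_)
  · intro i hi
    rw [Finset.mem_filter] at hi ⊢
    obtain ⟨-, h1, h2⟩ := hi
    have hv : (nxt i : ℕ) = (i : ℕ) + 1 := Nat.mod_eq_of_lt h1
    have hprev : prev (nxt i) = i := Fin.ext (show (nxt i : ℕ) - 1 = (i : ℕ) by omega)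
    exact ⟨Finset.mem_univ _, ⟨by rw [hv]; omega, by rw [hprev]; exact h2⟩⟩
  · intro j hj
    rw [Finset.mem_filter] at hj ⊢
    obtain ⟨-, h1, h2⟩ := hj
    have hjn : (j : ℕ) < n := j.2
    have hv : (prev j : ℕ) = (j : ℕ) - 1 := rfl
    have hnx : nxt (prev j) = j := Fin.ext
      (show ((prev j : ℕ) + 1) % n = (j : ℕ) by
        rw [hv]
        have h3 : (j : ℕ) - 1 + 1 = (j : ℕ) := by omega
        rw [h3, Nat.mod_eq_of_lt hjn])
    refine ⟨Finset.mem_univ _, by rw [hv]; omega, ?_⟩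
    rw [hnx]
    exact h2
  · intro i hi
    rw [Finset.mem_filter] at hi
    have hv : (nxt i : ℕ) = (i : ℕ) + 1 := Nat.mod_eq_of_lt hi.2.1
    exact Fin.ext (show (nxt i : ℕ) - 1 = (i : ℕ) by omega)
  · intro j hj
    rw [Finset.mem_filter] at hj
    obtain ⟨-, h1, -⟩ := hj
    have hjn : (j : ℕ) < n := j.2
    exact Fin.ext (show ((prev j : ℕ) + 1) % n = (j : ℕ) by
      have hv : (prev j : ℕ) = (j : ℕ) - 1 := rfl
      rw [hv]
      have h3 : (j : ℕ) - 1 + 1 = (j : ℕ) := by omega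
      rw [h3, Nat.mod_eq_of_lt hjn])

/-- The slab. -/
def slab (n k : ℕ) : Set (Fin n → ℝ) :=
  {x : Fin n → ℝ | (∀ i, x i ∈ Set.Icc (0 : ℝ) 1) ∧
    (k : ℝ) ≤ ∑ i, x i ∧ ∑ i, x i ≤ (k : ℝ) + 1}

lemma sum_psi (hn : 0 < n) (τ : Equiv.Perm (Fin n)) (y : Fin n → ℝ) :
    ∑ i, psi τ y i = y ⟨n - 1, by omega⟩ + (desCard τ : ℝ) := by
  have h1 : ∑ i, psi τ y i = ∑ i, Lmap n y i + ∑ i, cvec τ i := by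
    simp [psi, Finset.sum_add_distrib]
  have h2 : ∑ i, Lmap n y i = y ⟨n - 1, by omega⟩ := by
    rw [← Fl_n hn]
    have h3 := Fl_Lmap hn y (n - 1) (by omega)
    have h4 : n - 1 + 1 = n := by omega
    rw [h4] at h3
    exact h3
  rw [h1, h2, sum_cvec]

lemma psi_mem_slab (hn : 0 < n) {k : ℕ} {τ : Equiv.Perm (Fin n)} (hτ : desCard τ = k)
    {y : Fin n → ℝ} (hy : y ∈ Eset τ) : psi τ y ∈ slab n k := by
  obtain ⟨h01, hord⟩ := hy
  refine ⟨fun i => ?_, ?_, ?_⟩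
  · show Lmap n y i + cvec τ i ∈ Set.Icc (0 : ℝ) 1
    rw [Lmap_apply]
    by_cases h0 : (i : ℕ) = 0
    · rw [if_pos h0]
      have hc : cvec τ i = 0 := by simp [cvec, isDes, h0]
      rw [hc]
      have := h01 i
      exact ⟨by simpa using this.1.le, by simpa using this.2.le⟩
    · rw [if_neg h0]
      have hpos : 0 < (i : ℕ) := Nat.pos_of_ne_zero h0
      have hpi := h01 (prev i)
      have hii := h01 i
      by_cases hd : isDes τ i
      · have hlt : y i < y (prev i) := hord _ _ hd.2
        have hc : cvec τ i = 1 := by simp [cvec, hd]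
        rw [hc]
        constructor <;> [linarith [hpi.2, hii.1]; linarith [hpi.1, hii.2]]
      · have hne : prev i ≠ i := ne_of_lt (prev_lt hpos)
        have hτne : τ (prev i) ≠ τ i := fun h => hne (τ.injective h)
        have hord' : τ (prev i) < τ i := by
          rcases lt_or_gt_of_ne hτne with h | h
          · exact h
          · exact absurd ⟨hpos, h⟩ hd
        have hlt : y (prev i) < y i := hord _ _ hord'
        have hc : cvec τ i = 0 := by simp [cvec, hd]
        rw [hc]
        constructor <;> [linarith [hpi.2, hii.1]; linarith [hpi.1, hii.2]]
  · rw [sum_psi hn, hτ]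
    have := (h01 ⟨n - 1, by omega⟩).1
    linarith
  · rw [sum_psi hn, hτ]
    have := (h01 ⟨n - 1, by omega⟩).2
    linarith

lemma psi_image_eq (hn : 0 < n) (τ : Equiv.Perm (Fin n)) :
    psi τ '' Eset τ
      = (fun x : Fin n → ℝ => fun i : Fin n => Fl hn ((i : ℕ) + 1) (x - cvec τ)) ⁻¹' Eset τ := by
  have key1 : ∀ y : Fin n → ℝ,
      (fun i : Fin n => Fl hn ((i : ℕ) + 1) (psi τ y - cvec τ)) = y := by
    intro y
    funext i
    have hsub : psi τ y - cvec τ = Lmap n y := by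
      funext j; simp [psi]
    rw [hsub]
    have := Fl_Lmap hn y (i : ℕ) i.2
    rwa [Fin.eta] at this
  have key2 : ∀ x : Fin n → ℝ,
      psi τ (fun i : Fin n => Fl hn ((i : ℕ) + 1) (x - cvec τ)) = x := by
    intro x
    have : Lmap n (fun i : Fin n => Fl hn ((i : ℕ) + 1) (x - cvec τ)) = x - cvec τ :=
      Lmap_Fl hn (x - cvec τ)
    simp only [psi, this]
    funext j
    simp
  ext x
  constructor
  · rintro ⟨y, hy, rfl⟩
    show (fun i : Fin n => Fl hn ((i : ℕ) + 1) (psi τ y - cvec τ)) ∈ Eset τ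
    rw [key1]
    exact hy
  · intro hx
    exact ⟨_, hx, key2 x⟩

lemma measurable_psi_image (hn : 0 < n) (τ : Equiv.Perm (Fin n)) :
    MeasurableSet (psi τ '' Eset τ) := by
  rw [psi_image_eq hn]
  refine (measurable_Eset τ).preimage ?_
  refine measurable_pi_lambda _ fun i => ?_
  exact (Fl hn ((i : ℕ) + 1)).continuous_of_finiteDimensional.measurable.comp
    (measurable_id.sub measurable_const)

lemma vol_psi_image (hn : 0 < n) (τ : Equiv.Perm (Fin n)) :
    volume (psi τ '' Eset τ) = volume (Eset τ) := by
  have h1 : psi τ '' Eset τ = (· + (-(cvec τ))) ⁻¹' (Lmap n '' Eset τ) := by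
    ext x
    simp only [Set.mem_image, Set.mem_preimage, psi]
    constructor
    · rintro ⟨y, hy, rfl⟩
      exact ⟨y, hy, by funext j; simp⟩
    · rintro ⟨y, hy, h⟩
      refine ⟨y, hy, ?_⟩
      funext j
      have := congrFun h j
      simp only [Pi.add_apply, Pi.neg_apply] at this ⊢
      linarith
  rw [h1, measure_preimage_add_right, Measure.addHaar_image_linearMap, det_Lmap]
  norm_num

lemma fract_Fl_psi (hn : 0 < n) (τ : Equiv.Perm (Fin n)) {y : Fin n → ℝ} (hy : y ∈ Eset τ)
    (i : Fin n) : Int.fract (Fl hn ((i : ℕ) + 1) (psi τ y)) = y i := by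
  obtain ⟨d, hd⟩ := Fl_cvec_int hn τ ((i : ℕ) + 1)
  have h1 : Fl hn ((i : ℕ) + 1) (psi τ y) = y i + (d : ℝ) := by
    have : psi τ y = Lmap n y + cvec τ := rfl
    rw [this, map_add, hd]
    congr 1
    have := Fl_Lmap hn y (i : ℕ) i.2
    rwa [Fin.eta] at this
  rw [h1, Int.fract_add_natCast]
  exact Int.fract_eq_self.2 ⟨(hy.1 i).1.le, (hy.1 i).2⟩

lemma psi_image_disjoint (hn : 0 < n) {τ₁ τ₂ : Equiv.Perm (Fin n)} (hne : τ₁ ≠ τ₂) :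
    Disjoint (psi τ₁ '' Eset τ₁) (psi τ₂ '' Eset τ₂) := by
  rw [Set.disjoint_left]
  rintro x ⟨y₁, hy₁, h1⟩ ⟨y₂, hy₂, h2⟩
  have hyy : y₁ = y₂ := by
    funext i
    rw [← fract_Fl_psi hn τ₁ hy₁ i, ← fract_Fl_psi hn τ₂ hy₂ i, h1, h2]
  exact hne (rank_unique hy₁.2 (hyy ▸ hy₂.2))

/-- The null set of points with some integral partial-sum relation. -/
def Bad (hn : 0 < n) : Set (Fin n → ℝ) :=
  (⋃ (i : Fin n) (m : ℤ), {x : Fin n → ℝ | Fl hn ((i : ℕ) + 1) x = (m : ℝ)}) ∪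
  (⋃ (p : Fin n × Fin n) (_ : p.1 ≠ p.2) (m : ℤ),
    {x : Fin n → ℝ | Fl hn ((p.1 : ℕ) + 1) x - Fl hn ((p.2 : ℕ) + 1) x = (m : ℝ)})

lemma vol_Bad (hn : 0 < n) : volume (Bad hn) = 0 := by
  refine measure_union_null ?_ ?_
  · refine measure_iUnion_null fun i => measure_iUnion_null fun m => ?_
    refine hyperplane_null _ (Pi.single i 1) ?_ (m : ℝ)
    rw [Fl_single hn i ((i : ℕ) + 1) i.2, if_pos (by omega)]
    norm_num
  · have key : ∀ (a b : Fin n), (a : ℕ) < (b : ℕ) → ∀ m : ℤ,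
        volume {x : Fin n → ℝ | Fl hn ((a : ℕ) + 1) x - Fl hn ((b : ℕ) + 1) x = (m : ℝ)} = 0 := by
      intro a b hab m
      have hseteq : {x : Fin n → ℝ | Fl hn ((a : ℕ) + 1) x - Fl hn ((b : ℕ) + 1) x = (m : ℝ)}
          = {x : Fin n → ℝ | (Fl hn ((a : ℕ) + 1) - Fl hn ((b : ℕ) + 1)) x = (m : ℝ)} := by
        ext x; simp
      rw [hseteq]
      refine hyperplane_null _ (Pi.single b 1) ?_ (m : ℝ)
      rw [LinearMap.sub_apply, Fl_single hn b _ a.2, Fl_single hn b _ b.2,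
        if_neg (by omega), if_pos (by omega)]
      norm_num
    refine measure_iUnion_null fun p =>
      measure_iUnion_null fun hp => measure_iUnion_null fun m => ?_
    have hpp : (p.1 : ℕ) ≠ (p.2 : ℕ) := fun h => hp (Fin.ext h)
    rcases Nat.lt_or_ge (p.1 : ℕ) (p.2 : ℕ) with hlt | hge
    · exact key p.1 p.2 hlt m
    · have hlt2 : (p.2 : ℕ) < (p.1 : ℕ) := by omega
      have hswap : {x : Fin n → ℝ | Fl hn ((p.1 : ℕ) + 1) x - Fl hn ((p.2 : ℕ) + 1) x = (m : ℝ)}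
          = {x : Fin n → ℝ |
              Fl hn ((p.2 : ℕ) + 1) x - Fl hn ((p.1 : ℕ) + 1) x = ((-m : ℤ) : ℝ)} := by
        ext x
        simp only [Set.mem_setOf_eq, Int.cast_neg]
        constructor <;> (intro h; linarith)
      rw [hswap]
      exact key p.2 p.1 hlt2 (-m)

lemma slab_cover (hn : 0 < n) {k : ℕ} :
    slab n k \ Bad hn ⊆
      ⋃ τ : {τ : Equiv.Perm (Fin n) // desCard τ = k}, psi (τ : Equiv.Perm (Fin n)) ''
        Eset (τ : Equiv.Perm (Fin n)) := by
  rintro x ⟨hxs, hxB⟩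
  obtain ⟨hIcc, hsum1, hsum2⟩ := hxs
  set s : Fin n → ℝ := fun i => Fl hn ((i : ℕ) + 1) x with hs
  have hnonint : ∀ (i : Fin n) (m : ℤ), s i ≠ (m : ℝ) := by
    intro i m h
    exact hxB (Or.inl (Set.mem_iUnion.2 ⟨i, Set.mem_iUnion.2 ⟨m, h⟩⟩))
  have hnondiff : ∀ (i j : Fin n), i ≠ j → ∀ m : ℤ, s i - s j ≠ (m : ℝ) := by
    intro i j hij m h
    exact hxB (Or.inr (Set.mem_iUnion.2 ⟨(i, j), Set.mem_iUnion.2 ⟨hij, Set.mem_iUnion.2 ⟨m, h⟩⟩⟩))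
  set y : Fin n → ℝ := fun i => Int.fract (s i) with hy
  have hyfract : ∀ i, y i = Int.fract (s i) := fun i => rfl
  have hyfloor : ∀ i, s i = y i + (⌊s i⌋ : ℝ) := by
    intro i
    rw [hyfract i]
    exact (Int.fract_add_floor (s i)).symm
  have hy01 : ∀ i, y i ∈ Set.Ioo (0 : ℝ) 1 := by
    intro i
    constructor
    · rcases eq_or_lt_of_le (Int.fract_nonneg (s i)) with h | h
      · exfalso
        refine hnonint i ⌊s i⌋ ?_
        have hy0 : y i = 0 := by rw [hyfract i, ← h]
        linarith [hyfloor i]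
      · rw [hyfract i]; exact h
    · rw [hyfract i]; exact Int.fract_lt_one _
  have hyinj : Function.Injective y := by
    intro a b hab
    by_contra hne
    refine hnondiff a b hne (⌊s a⌋ - ⌊s b⌋) ?_
    push_cast
    linarith [hyfloor a, hyfloor b, hab.le, hab.ge]
  obtain ⟨τ, hτ⟩ := rank_exists y hyinj
  have hyE : y ∈ Eset τ := ⟨hy01, hτ⟩
  have hpsix : psi τ y = x := by
    funext i
    show Lmap n y i + cvec τ i = x i
    rw [Lmap_apply]
    by_cases h0 : (i : ℕ) = 0
    · rw [if_pos h0]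
      have hc : cvec τ i = 0 := by simp [cvec, isDes, h0]
      rw [hc, add_zero]
      have hsx : s i = x i := by
        have e1 : s i = Fl hn ((i : ℕ) + 1) x := rfl
        rw [e1, h0, Fl_succ, Fl_zero, zero_add]
        exact congrArg x (Fin.ext (by rw [fm_of_lt hn hn, h0]))
      have hx01 : x i ∈ Set.Icc (0 : ℝ) 1 := hIcc i
      have hxne1 : x i ≠ 1 := fun h => hnonint i 1 (by rw [hsx, h]; norm_num)
      rw [hyfract i, hsx]
      exact Int.fract_eq_self.2 ⟨hx01.1, lt_of_le_of_ne hx01.2 hxne1⟩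
    · rw [if_neg h0]
      have hpos : 0 < (i : ℕ) := Nat.pos_of_ne_zero h0
      have hsdiff : s i - s (prev i) = x i := by
        have e1 : s i = Fl hn ((i : ℕ) + 1) x := rfl
        have hp1 : ((prev i : ℕ) + 1) = (i : ℕ) := by
          have hv : (prev i : ℕ) = (i : ℕ) - 1 := rfl
          omega
        have e2 : s (prev i) = Fl hn ((i : ℕ)) x := by
          have e3 : s (prev i) = Fl hn ((prev i : ℕ) + 1) x := rfl
          rw [e3, hp1]
        rw [e1, e2]
        have hiq : (i : ℕ) + 1 = (i : ℕ) + 1 := rfl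
        rw [Fl_succ]
        have hfmi : fm hn (i : ℕ) = i := Fin.ext (fm_of_lt hn i.2)
        rw [hfmi]
        ring
      set m : ℤ := ⌊s i⌋ - ⌊s (prev i)⌋ with hm
      have hmcast : (m : ℝ) = (⌊s i⌋ : ℝ) - (⌊s (prev i)⌋ : ℝ) := by
        rw [hm]; push_cast; ring
      have hxi : x i = (y i - y (prev i)) + (m : ℝ) := by
        have h1 := hyfloor i
        have h2 := hyfloor (prev i)
        linarith [hsdiff]
      have hx01 : x i ∈ Set.Icc (0 : ℝ) 1 := hIcc i
      have hprevne : prev i ≠ i := ne_of_lt (prev_lt hpos)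
      have hyne : y (prev i) ≠ y i := fun h => hprevne (hyinj h)
      have hyi := hy01 i
      have hypi := hy01 (prev i)
      by_cases hlt : y i < y (prev i)
      · have hdes : isDes τ i := ⟨hpos, (rank_lt_iff hτ i (prev i)).2 hlt⟩
        have hc : cvec τ i = 1 := by simp [cvec, hdes]
        rw [hc]
        have hm1 : (m : ℝ) = 1 := by
          have hb1 : (0 : ℝ) < (m : ℝ) := by linarith [hx01.1]
          have hb2 : (m : ℝ) < 2 := by linarith [hx01.2, hyi.1, hypi.2]
          have hb : (0 : ℤ) < m ∧ m < 2 := by exact_mod_cast And.intro hb1 hb2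
          have : m = 1 := by omega
          rw [this]; norm_num
        rw [hxi, hm1]
      · have hgt : y (prev i) < y i := lt_of_le_of_ne (not_lt.1 hlt) hyne
        have hndes : ¬ isDes τ i := by
          intro hdes
          exact absurd (hτ _ _ hdes.2) (not_lt.2 hgt.le)
        have hc : cvec τ i = 0 := by simp [cvec, hndes]
        rw [hc]
        have hm0 : (m : ℝ) = 0 := by
          have hb1 : (-1 : ℝ) < (m : ℝ) := by linarith [hx01.1, hyi.2, hypi.1]
          have hb2 : (m : ℝ) < 1 := by linarith [hx01.2]
          have hb : (-1 : ℤ) < m ∧ m < 1 := by exact_mod_cast And.intro hb1 hb2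
          have : m = 0 := by omega
          rw [this]; norm_num
        rw [hxi, hm0, add_zero]
  have hdk : desCard τ = k := by
    have hsum : ∑ i, x i = y ⟨n - 1, by omega⟩ + (desCard τ : ℝ) := by
      rw [← hpsix, sum_psi hn]
    have hylast := hy01 ⟨n - 1, by omega⟩
    have h1 : (desCard τ : ℝ) < (k : ℝ) + 1 := by
      rw [hsum] at hsum2
      linarith [hylast.1]
    have h2 : (k : ℝ) < (desCard τ : ℝ) + 1 := by
      rw [hsum] at hsum1
      linarith [hylast.2]
    have h1' : desCard τ < k + 1 := by exact_mod_cast h1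
    have h2' : k < desCard τ + 1 := by exact_mod_cast h2
    omega
  exact Set.mem_iUnion.2 ⟨⟨τ, hdk⟩, ⟨y, hyE, hpsix⟩⟩

end S13

/-- The slab `{x ∈ [0,1]^n : k ≤ Σ x_i ≤ k+1}` has volume `A(n,k)/n!`. -/
theorem stmt13 (n k : ℕ) (hn : 0 < n) (hk : k < n) :
    MeasureTheory.volume
        {x : Fin n → ℝ | (∀ i, x i ∈ Set.Icc (0 : ℝ) 1) ∧
          (k : ℝ) ≤ ∑ i, x i ∧ ∑ i, x i ≤ (k : ℝ) + 1}
      = (eulerian n k : ENNReal) / (Nat.factorial n : ENNReal) := by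
  classical
  have hslab : {x : Fin n → ℝ | (∀ i, x i ∈ Set.Icc (0 : ℝ) 1) ∧
      (k : ℝ) ≤ ∑ i, x i ∧ ∑ i, x i ≤ (k : ℝ) + 1} = S13.slab n k := rfl
  set ι := {τ : Equiv.Perm (Fin n) // S13.desCard τ = k} with hι
  set U : Set (Fin n → ℝ) :=
    ⋃ τ : ι, S13.psi (τ : Equiv.Perm (Fin n)) '' S13.Eset (τ : Equiv.Perm (Fin n)) with hU
  have hUsub : U ⊆ S13.slab n k := by
    refine Set.iUnion_subset fun τ => ?_
    rintro x ⟨y, hy, rfl⟩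
    exact S13.psi_mem_slab hn τ.2 hy
  have hvol_eq : MeasureTheory.volume (S13.slab n k) = MeasureTheory.volume U := by
    refine le_antisymm ?_ (measure_mono hUsub)
    have h1 : MeasureTheory.volume (S13.slab n k)
        = MeasureTheory.volume (S13.slab n k \ S13.Bad hn) :=
      (measure_diff_null (S13.vol_Bad hn)).symm
    rw [h1]
    exact measure_mono (S13.slab_cover hn)
  have hdisj : Pairwise (Function.onFun Disjoint
      fun τ : ι => S13.psi (τ : Equiv.Perm (Fin n)) '' S13.Eset (τ : Equiv.Perm (Fin n))) := by
    intro τ₁ τ₂ hne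
    exact S13.psi_image_disjoint hn fun h => hne (Subtype.ext h)
  have hms : ∀ τ : ι, MeasurableSet
      (S13.psi (τ : Equiv.Perm (Fin n)) '' S13.Eset (τ : Equiv.Perm (Fin n))) :=
    fun τ => S13.measurable_psi_image hn _
  have hval : ∀ τ : ι, MeasureTheory.volume
      (S13.psi (τ : Equiv.Perm (Fin n)) '' S13.Eset (τ : Equiv.Perm (Fin n)))
      = 1 / (Nat.factorial n : ENNReal) := by
    intro τ
    rw [S13.vol_psi_image hn, S13.vol_Eset hn]
  have hcard : Fintype.card ι = eulerian n k := by
    show Fintype.card {τ : Equiv.Perm (Fin n) // S13.desCard τ = k} = eulerian n k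
    rw [Fintype.card_subtype]
    unfold eulerian
    apply congrArg Finset.card
    apply Finset.filter_congr
    intro τ _
    rw [S13.desCard_eq]
    exact Iff.rfl
  rw [hslab, hvol_eq, hU, measure_iUnion hdisj hms, tsum_congr hval, tsum_fintype,
    Finset.sum_const, Finset.card_univ, hcard, nsmul_eq_mul, mul_one_div]
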